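/- Let 0 → U → V → W → 0 be a short exact sequence of finite-dimensional K-vector spaces. For each l ≥ 0 and 0 ≤ i ≤ l, let F_i ⊆ Λ^l V be the image of U^{⊗i} ⊗ V^{⊗(l−i)} under the canonical projection V^{⊗l} → Λ^l V (via the inclusion U ⊆ V). Then F_{l+1} = 0 ⊆ F_l ⊆ ... ⊆ F_0 = Λ^l V is a filtration with F_i/F_{i+1} ≅ Λ^i U ⊗ Λ^{l−i} W. -/

import Mathlib

open ExteriorAlgebra

variable {K V : Type*} [Field K] [AddCommGroup V] [Module K V]

/-- The `i`-th step of the filtration of `Λ^l V` induced by a subspace `U ⊆ V`: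
the image of `U^{⊗i} ⊗ V^{⊗(l-i)}` in `Λ^l V`, i.e. the span of the wedges
`u₁∧...∧uᵢ∧v_{i+1}∧...∧v_l` with `u_j ∈ U`, `v_j ∈ V` (and `0` for `i > l`). -/
noncomputable def exteriorFiltration (U : Submodule K V) (l i : ℕ) :
    Submodule K (ExteriorAlgebra K V) :=
  if i ≤ l then
    Submodule.span K
      {w | ∃ u : Fin l → V, (∀ j : Fin l, (j : ℕ) < i → u j ∈ U) ∧
        w = ExteriorAlgebra.ιMulti K l u}
  else ⊥


set_option linter.unusedSectionVars false
set_option synthInstance.maxHeartbeats 1000000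
set_option maxHeartbeats 1000000

namespace ExtFil

section Counting


-- counting lemmas
variable {α : Type*} [Fintype α] [DecidableEq α]

lemma card_split (p : α → Prop) [DecidablePred p] {l i m m' : ℕ} (hil : i ≤ l)
    (hm : (Finset.univ.filter p).card = m)
    (hm' : (Finset.univ.filter fun a => ¬ p a).card = m') :
    (Finset.univ.filter fun S : Finset α => S.card = l ∧ (S.filter p).card = i).card
      = m.choose i * m'.choose (l - i) := by
  rw [← hm, ← hm', ← Finset.card_powersetCard, ← Finset.card_powersetCard,
    ← Finset.card_product]
  refine Finset.card_bij' (fun S _ => (S.filter p, S.filter fun a => ¬ p a))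
    (fun P _ => P.1 ∪ P.2) ?hi ?hj ?left ?right
  case hi =>
    rintro S hS
    try dsimp only
    obtain ⟨hSl, hSi⟩ := Finset.mem_filter.1 hS |>.2
    have hadd := Finset.card_filter_add_card_filter_not (s := S) (p := p)
    rw [Finset.mem_product]
    constructor
    · exact Finset.mem_powersetCard.2 ⟨Finset.filter_subset_filter p (Finset.subset_univ S), hSi⟩
    · refine Finset.mem_powersetCard.2 ⟨Finset.filter_subset_filter _ (Finset.subset_univ S), ?_⟩
      show (S.filter fun a => ¬ p a).card = l - i
      omega
  case hj =>
    rintro ⟨A, B⟩ hP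
    dsimp only
    obtain ⟨hA, hB⟩ := Finset.mem_product.1 hP
    dsimp only at hA hB
    obtain ⟨hAsub, hAcard⟩ := Finset.mem_powersetCard.1 hA
    obtain ⟨hBsub, hBcard⟩ := Finset.mem_powersetCard.1 hB
    have hpA : ∀ a ∈ A, p a := fun a ha => (Finset.mem_filter.1 (hAsub ha)).2
    have hpB : ∀ a ∈ B, ¬ p a := fun a ha => (Finset.mem_filter.1 (hBsub ha)).2
    have hdisj : Disjoint A B := Finset.disjoint_left.2 fun a ha hb => hpB a hb (hpA a ha)
    refine Finset.mem_filter.2 ⟨Finset.mem_univ _, ?_, ?_⟩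
    · show (A ∪ B).card = l
      rw [Finset.card_union_of_disjoint hdisj]
      omega
    · show ((A ∪ B).filter p).card = i
      rw [Finset.filter_union, Finset.filter_true_of_mem hpA,
        Finset.filter_false_of_mem hpB, Finset.union_empty, hAcard]
  case left =>
    intro S hS
    exact Finset.filter_union_filter_not_eq p S
  case right =>
    rintro ⟨A, B⟩ hP
    obtain ⟨hA, hB⟩ := Finset.mem_product.1 hP
    dsimp only at hA hB
    obtain ⟨hAsub, -⟩ := Finset.mem_powersetCard.1 hA
    obtain ⟨hBsub, -⟩ := Finset.mem_powersetCard.1 hB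
    have hpA : ∀ a ∈ A, p a := fun a ha => (Finset.mem_filter.1 (hAsub ha)).2
    have hpB : ∀ a ∈ B, ¬ p a := fun a ha => (Finset.mem_filter.1 (hBsub ha)).2
    have h1 : (A ∪ B).filter p = A := by
      rw [Finset.filter_union, Finset.filter_true_of_mem hpA,
        Finset.filter_false_of_mem hpB, Finset.union_empty]
    have h2 : ((A ∪ B).filter fun a => ¬ p a) = B := by
      rw [Finset.filter_union, Finset.filter_false_of_mem fun a ha => not_not_intro (hpA a ha),
        Finset.filter_true_of_mem hpB, Finset.empty_union]
    simp [h1, h2]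

lemma card_conv (p : Finset α → Prop) [DecidablePred p] (l : ℕ) :
    Fintype.card {S : {S : Finset α // S.card = l} // p S.1} =
      (Finset.univ.filter fun S : Finset α => S.card = l ∧ p S).card := by
  rw [Fintype.card_congr (Equiv.subtypeSubtypeEquivSubtypeInter _ _), Fintype.card_subtype]

lemma card_step (p : α → Prop) [DecidablePred p] (l i : ℕ) :
    (Finset.univ.filter fun S : Finset α => S.card = l ∧ i ≤ (S.filter p).card).card
      = (Finset.univ.filter fun S : Finset α => S.card = l ∧ i + 1 ≤ (S.filter p).card).card
      + (Finset.univ.filter fun S : Finset α => S.card = l ∧ (S.filter p).card = i).card := by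
  have key := Finset.card_filter_add_card_filter_not
    (s := Finset.univ.filter fun S : Finset α => S.card = l ∧ i ≤ (S.filter p).card)
    (p := fun S => (S.filter p).card = i)
  rw [Finset.filter_filter, Finset.filter_filter] at key
  rw [← key]
  have e1 : (Finset.univ.filter fun S : Finset α =>
      (S.card = l ∧ i ≤ (S.filter p).card) ∧ (S.filter p).card = i)
      = Finset.univ.filter fun S : Finset α => S.card = l ∧ (S.filter p).card = i := by
    apply Finset.filter_congr
    intro S _
    constructor
    · rintro ⟨⟨h1, _⟩, h3⟩; exact ⟨h1, h3⟩
    · rintro ⟨h1, h3⟩; exact ⟨⟨h1, h3.ge⟩, h3⟩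
  have e2 : (Finset.univ.filter fun S : Finset α =>
      (S.card = l ∧ i ≤ (S.filter p).card) ∧ ¬ (S.filter p).card = i)
      = Finset.univ.filter fun S : Finset α => S.card = l ∧ i + 1 ≤ (S.filter p).card := by
    apply Finset.filter_congr
    intro S _
    constructor
    · rintro ⟨⟨h1, h2⟩, h3⟩; exact ⟨h1, by omega⟩
    · rintro ⟨h1, h3⟩; exact ⟨⟨h1, by omega⟩, by omega⟩
  rw [e1, e2, Nat.add_comm]

lemma card_top_empty (p : α → Prop) [DecidablePred p] (l : ℕ) :
    (Finset.univ.filter fun S : Finset α => S.card = l ∧ l + 1 ≤ (S.filter p).card).card = 0 := by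
  rw [Finset.card_eq_zero, Finset.filter_eq_empty_iff]
  rintro S -
  rintro ⟨rfl, hle⟩
  have := Finset.card_filter_le S p
  omega


end Counting

section Wedge


variable {n : ℕ} (b : Module.Basis (Fin n) K V) (l : ℕ)

noncomputable def wedge (S : {S : Finset (Fin n) // S.card = l}) : ExteriorAlgebra K V :=
  ιMulti K l fun a => b (S.1.orderIsoOfFin S.2 a)

noncomputable def dualAlt (S : {S : Finset (Fin n) // S.card = l}) : V [⋀^Fin l]→ₗ[K] K :=
  (Matrix.detRowAlternating).compLinearMap
    (LinearMap.pi fun a => b.coord (S.1.orderIsoOfFin S.2 a))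

noncomputable def dualFun (S : {S : Finset (Fin n) // S.card = l}) :
    ExteriorAlgebra K V →ₗ[K] K :=
  liftAlternating (Function.update (fun _ => 0) l (dualAlt b l S))

lemma dualFun_wedge (S T : {S : Finset (Fin n) // S.card = l}) :
    dualFun b l S (wedge b l T) = if S = T then 1 else 0 := by
  rw [dualFun, wedge, liftAlternating_apply_ιMulti, Function.update_self, dualAlt,
    AlternatingMap.compLinearMap_apply]
  have hmat : ∀ c a : Fin l,
      (LinearMap.pi fun a => b.coord (S.1.orderIsoOfFin S.2 a)) (b (T.1.orderIsoOfFin T.2 c)) a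
      = if (T.1.orderIsoOfFin T.2 c : Fin n) = (S.1.orderIsoOfFin S.2 a : Fin n) then 1 else 0 := by
    intro c a
    simp [Module.Basis.coord_apply, Module.Basis.repr_self, Finsupp.single_apply]
    try congr
  by_cases h : S = T
  · subst h
    rw [if_pos rfl]
    have : (fun c => (LinearMap.pi fun a => b.coord (S.1.orderIsoOfFin S.2 a))
        (b (S.1.orderIsoOfFin S.2 c))) = (1 : Matrix (Fin l) (Fin l) K) := by
      ext c a
      rw [hmat c a, Matrix.one_apply]
      congr 1
      simp only [eq_iff_iff]
      constructor
      · intro hh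
        exact (S.1.orderIsoOfFin S.2).injective (Subtype.ext hh)
      · rintro rfl; rfl
    rw [this]
    exact Matrix.det_one
  · rw [if_neg h]
    have hST : ¬ T.1 ⊆ S.1 := by
      intro hsub
      exact h (Subtype.ext (Finset.eq_of_subset_of_card_le hsub (S.2.trans T.2.symm).le)).symm
    obtain ⟨x, hxT, hxS⟩ := Finset.not_subset.1 hST
    set c := (T.1.orderIsoOfFin T.2).symm ⟨x, hxT⟩ with hc
    apply Matrix.det_eq_zero_of_row_eq_zero c
    intro a
    rw [hmat c a, if_neg]
    intro hh
    apply hxS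
    have : (T.1.orderIsoOfFin T.2 c : Fin n) = x := by
      rw [hc, OrderIso.apply_symm_apply]
    rw [this] at hh
    rw [hh]
    exact (S.1.orderIsoOfFin S.2 a).2

lemma wedge_linearIndependent : LinearIndependent K (wedge b l) := by
  rw [linearIndependent_iff]
  intro c hc
  ext T
  have h := congrArg (dualFun b l T) hc
  rw [Finsupp.linearCombination_apply, Finsupp.sum, map_sum, map_zero] at h
  simp only [map_smul, dualFun_wedge, smul_eq_mul] at h
  rw [Finset.sum_eq_single T (fun S _ hST => by rw [if_neg (Ne.symm hST), mul_zero])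
    (fun hT => by rw [Finsupp.notMem_support_iff.1 hT, zero_mul])] at h
  simpa using h




lemma card_filter_val_lt {l : ℕ} (i : ℕ) (h : i ≤ l) :
    ((Finset.univ : Finset (Fin l)).filter fun j : Fin l => (j : ℕ) < i).card = i := by
  rcases lt_or_eq_of_le h with h' | rfl
  · have : ((Finset.univ : Finset (Fin l)).filter fun j : Fin l => (j : ℕ) < i)
        = Finset.Iio ⟨i, h'⟩ := by
      ext j
      simp [Fin.lt_def]
    rw [this, Fin.card_Iio]
  · rw [Finset.filter_true_of_mem fun j _ => j.2, Finset.card_univ, Fintype.card_fin]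

lemma wedge_mem_filtration (U : Submodule K V) {m : ℕ}
    (hU : U = Submodule.span K (b '' {k : Fin n | (k : ℕ) < m}))
    {i : ℕ} (hil : i ≤ l) (S : {S : Finset (Fin n) // S.card = l})
    (hS : i ≤ (S.1.filter fun k : Fin n => (k : ℕ) < m).card) :
    wedge b l S ∈ exteriorFiltration U l i := by
  rw [exteriorFiltration, if_pos hil]
  apply Submodule.subset_span
  refine ⟨fun a => b (S.1.orderIsoOfFin S.2 a), fun j hj => ?_, rfl⟩
  rw [hU]
  apply Submodule.subset_span
  refine ⟨(S.1.orderIsoOfFin S.2 j : Fin n), ?_, rfl⟩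
  -- show its value is < m
  by_contra hge
  try push_neg at hge
  have hsub : S.1.filter (fun k : Fin n => (k : ℕ) < m) ⊆
      (Finset.Iio j).image fun a => (S.1.orderIsoOfFin S.2 a : Fin n) := by
    intro x hx
    obtain ⟨hxS, hxm⟩ := Finset.mem_filter.1 hx
    set a := (S.1.orderIsoOfFin S.2).symm ⟨x, hxS⟩ with ha
    have hax : (S.1.orderIsoOfFin S.2 a : Fin n) = x := by
      rw [ha, OrderIso.apply_symm_apply]
    refine Finset.mem_image.2 ⟨a, ?_, hax⟩
    rw [Finset.mem_Iio]
    rw [← OrderIso.lt_iff_lt (S.1.orderIsoOfFin S.2), ← Subtype.coe_lt_coe]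
    rw [hax]
    have hm : m ≤ ((S.1.orderIsoOfFin S.2 j : Fin n) : ℕ) := by simpa using hge
    exact Fin.lt_def.2 (lt_of_lt_of_le hxm hm)
  have := (Finset.card_le_card hsub).trans
    ((Finset.card_image_le).trans (by rw [Fin.card_Iio]))
  omega

lemma ιMulti_mem_span_wedge {m i : ℕ} (hil : i ≤ l) (r : Fin l → Fin n)
    (hr : ∀ j : Fin l, (j : ℕ) < i → (r j : ℕ) < m) :
    ιMulti K l (fun j => b (r j)) ∈
      Submodule.span K (wedge b l ''
        {S | i ≤ (S.1.filter fun k : Fin n => (k : ℕ) < m).card}) := by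
  by_cases hinj : Function.Injective r
  · set S : {S : Finset (Fin n) // S.card = l} :=
      ⟨Finset.univ.image r, by
        rw [Finset.card_image_of_injective _ hinj, Finset.card_univ, Fintype.card_fin]⟩ with hSdef
    have hmemS : ∀ j, r j ∈ S.1 := fun j => Finset.mem_image_of_mem r (Finset.mem_univ j)
    have hSgood : i ≤ (S.1.filter fun k : Fin n => (k : ℕ) < m).card := by
      have hsub : (Finset.univ.filter fun j : Fin l => (j : ℕ) < i).image r
          ⊆ S.1.filter fun k : Fin n => (k : ℕ) < m := by
        intro x hx
        obtain ⟨j, hj, rfl⟩ := Finset.mem_image.1 hx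
        exact Finset.mem_filter.2 ⟨hmemS j, hr j (Finset.mem_filter.1 hj).2⟩
      have := Finset.card_le_card hsub
      rwa [Finset.card_image_of_injective _ hinj, card_filter_val_lt i hil] at this
    -- build permutation
    have hcard : Fintype.card (Fin l) = Fintype.card {x // x ∈ S.1} := by
      rw [Fintype.card_fin, Fintype.card_coe, S.2]
    set g : Fin l → {x // x ∈ S.1} := fun j => ⟨r j, hmemS j⟩ with hg
    have hginj : Function.Injective g := fun a a' h =>
      hinj (congrArg Subtype.val h)
    have hgbij : Function.Bijective g :=
      (Fintype.bijective_iff_injective_and_card g).2 ⟨hginj, hcard⟩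
    set σ : Equiv.Perm (Fin l) :=
      (Equiv.ofBijective g hgbij).trans (S.1.orderIsoOfFin S.2).toEquiv.symm with hσ
    have hkey : (fun a => b (S.1.orderIsoOfFin S.2 a)) ∘ σ = fun j => b (r j) := by
      funext j
      simp only [Function.comp_apply, hσ, Equiv.trans_apply]
      congr 1
      have : (S.1.orderIsoOfFin S.2) ((S.1.orderIsoOfFin S.2).toEquiv.symm
          (Equiv.ofBijective g hgbij j)) = Equiv.ofBijective g hgbij j := by
        exact (S.1.orderIsoOfFin S.2).toEquiv.apply_symm_apply _
      rw [this]
      rfl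
    have hperm := (ιMulti K l (M := V)).map_perm (fun a => b (S.1.orderIsoOfFin S.2 a)) σ
    rw [hkey] at hperm
    rcases Int.units_eq_one_or (Equiv.Perm.sign σ) with h1 | h1 <;> rw [h1] at hperm
    · rw [hperm, one_smul]
      exact Submodule.subset_span ⟨S, hSgood, rfl⟩
    · rw [hperm, Units.neg_smul, one_smul]
      exact Submodule.neg_mem _ (Submodule.subset_span ⟨S, hSgood, rfl⟩)
  · obtain ⟨a, a', heq, hne⟩ := Function.not_injective_iff.1 hinj
    rw [AlternatingMap.map_eq_zero_of_eq _ _ (by rw [heq]) hne]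
    exact Submodule.zero_mem _

lemma filtration_eq_span (U : Submodule K V) {m : ℕ}
    (hU : U = Submodule.span K (b '' {k : Fin n | (k : ℕ) < m}))
    {i : ℕ} (hil : i ≤ l) :
    exteriorFiltration U l i =
      Submodule.span K (wedge b l ''
        {S | i ≤ (S.1.filter fun k : Fin n => (k : ℕ) < m).card}) := by
  refine le_antisymm ?_ (Submodule.span_le.2 ?_)
  · rw [exteriorFiltration, if_pos hil]
    rw [Submodule.span_le]
    rintro w ⟨u, hu, rfl⟩
    have hrepr : ∀ j, u j = ∑ k ∈ (b.repr (u j)).support, b.repr (u j) k • b k := by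
      intro j
      conv_lhs => rw [← b.linearCombination_repr (u j)]
      rw [Finsupp.linearCombination_apply, Finsupp.sum]
    have hexp : ιMulti K l u = ∑ r ∈ Fintype.piFinset (fun j => (b.repr (u j)).support),
        ιMulti K l fun j => b.repr (u j) (r j) • b (r j) := by
      conv_lhs => rw [show u = fun j => ∑ k ∈ (b.repr (u j)).support, b.repr (u j) k • b k
        from funext hrepr]
      exact (ιMulti K l (M := V)).toMultilinearMap.map_sum_finset _ _
    rw [hexp]
    apply Submodule.sum_mem
    intro r hrmem
    have : (ιMulti K l fun j => b.repr (u j) (r j) • b (r j)) =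
        (∏ j, b.repr (u j) (r j)) • ιMulti K l fun j => b (r j) :=
      (ιMulti K l (M := V)).toMultilinearMap.map_smul_univ _ _
    rw [this]
    apply Submodule.smul_mem
    apply ιMulti_mem_span_wedge b l hil
    intro j hj
    have hsupp : ((b.repr (u j)).support : Set (Fin n)) ⊆ {k : Fin n | (k : ℕ) < m} :=
      b.repr_support_subset_of_mem_span _ (by rw [← hU]; exact hu j hj)
    have hrj : r j ∈ (b.repr (u j)).support := by
      have := Fintype.mem_piFinset.1 hrmem j
      exact this
    exact hsupp hrj
  · rintro w ⟨S, hS, rfl⟩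
    exact wedge_mem_filtration b l U hU hil S hS



lemma filtration_finrank (U : Submodule K V) {m : ℕ}
    (hU : U = Submodule.span K (b '' {k : Fin n | (k : ℕ) < m}))
    {i : ℕ} (hil : i ≤ l) :
    Module.finrank K (exteriorFiltration U l i) =
      (Finset.univ.filter fun S : Finset (Fin n) =>
        S.card = l ∧ i ≤ (S.filter fun k : Fin n => (k : ℕ) < m).card).card := by
  rw [filtration_eq_span b l U hU hil]
  have hind : LinearIndependent K
      (fun S : {S : {S : Finset (Fin n) // S.card = l} //
          i ≤ (S.1.1.filter fun k : Fin n => (k : ℕ) < m).card} => wedge b l S.1) :=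
    (wedge_linearIndependent b l).comp _ Subtype.val_injective
  rw [Set.image_eq_range, ← card_conv]
  exact finrank_span_eq_card hind

lemma filtration_fd (U : Submodule K V) {m : ℕ}
    (hU : U = Submodule.span K (b '' {k : Fin n | (k : ℕ) < m}))
    {i : ℕ} (hil : i ≤ l) :
    FiniteDimensional K (exteriorFiltration U l i) := by
  rw [filtration_eq_span b l U hU hil]
  exact FiniteDimensional.span_of_finite K (Set.Finite.image _ (Set.toFinite _))

end Wedge

lemma filtration_zero (U : Submodule K V) (l : ℕ) :
    exteriorFiltration U l 0 = ⋀[K]^l V := by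
  rw [exteriorFiltration, if_pos (Nat.zero_le l), ← ιMulti_span_fixedDegree K l]
  congr 1
  ext w
  constructor
  · rintro ⟨u, -, rfl⟩
    exact ⟨u, rfl⟩
  · rintro ⟨u, rfl⟩
    exact ⟨u, fun j hj => absurd hj (Nat.not_lt_zero _), rfl⟩

lemma bot_span_aux {W : Type*} [AddCommGroup W] [Module K W] {d : ℕ} (b : Module.Basis (Fin d) K W) :
    (⊥ : Submodule K W) = Submodule.span K (b '' {k : Fin d | (k : ℕ) < 0}) := by
  have : {k : Fin d | (k : ℕ) < 0} = ∅ := by ext k; simp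
  rw [this, Set.image_empty, Submodule.span_empty]

lemma exteriorPower_fd {W : Type*} [AddCommGroup W] [Module K W] [FiniteDimensional K W]
    (l : ℕ) : FiniteDimensional K (⋀[K]^l W) := by
  rw [← filtration_zero (⊥ : Submodule K W) l]
  exact filtration_fd (Module.finBasis K W) l ⊥ (bot_span_aux _) (Nat.zero_le l)

lemma finrank_exteriorPower {W : Type*} [AddCommGroup W] [Module K W] [FiniteDimensional K W]
    (l : ℕ) : Module.finrank K (⋀[K]^l W) = (Module.finrank K W).choose l := by
  let b := Module.finBasis K W
  rw [← filtration_zero (⊥ : Submodule K W) l,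
    filtration_finrank b l ⊥ (bot_span_aux b) (Nat.zero_le l)]
  have he : (Finset.univ.filter fun S : Finset (Fin (Module.finrank K W)) =>
      S.card = l ∧ 0 ≤ (S.filter fun k : Fin (Module.finrank K W) => (k : ℕ) < 0).card)
      = Finset.univ.filter fun S : Finset (Fin (Module.finrank K W)) => S.card = l := by
    apply Finset.filter_congr
    intro S _
    simp
  rw [he, ← Fintype.card_subtype, Fintype.card_finset_len, Fintype.card_fin]



lemma exists_adapted [FiniteDimensional K V] (U : Submodule K V) :
    ∃ b : Module.Basis (Fin (Module.finrank K U + Module.finrank K (V ⧸ U))) K V,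
      U = Submodule.span K (b '' {k | (k : ℕ) < Module.finrank K U}) := by
  obtain ⟨U', hcompl⟩ := U.exists_isCompl
  set m := Module.finrank K U with hm
  have hq : Module.finrank K (V ⧸ U) = Module.finrank K U' :=
    (Submodule.quotientEquivOfIsCompl U U' hcompl).finrank_eq
  let bU := Module.finBasis K U
  let bU' := Module.finBasis K U'
  let e := Submodule.prodEquivOfIsCompl U U' hcompl
  let b0 : Module.Basis (Fin m ⊕ Fin (Module.finrank K U')) K V := (bU.prod bU').map e
  let b1 : Module.Basis (Fin (m + Module.finrank K U')) K V := b0.reindex finSumFinEquiv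
  let b : Module.Basis (Fin (m + Module.finrank K (V ⧸ U))) K V :=
    b1.reindex (finCongr (by rw [hq]))
  refine ⟨b, ?_⟩
  have hbl : ∀ a : Fin m, b ⟨(a : ℕ), by omega⟩ = (bU a : V) := by
    intro a
    rw [show b = b1.reindex (finCongr (by rw [hq])) from rfl, Module.Basis.reindex_apply,
      show b1 = b0.reindex finSumFinEquiv from rfl, Module.Basis.reindex_apply]
    have hidx : finSumFinEquiv.symm ((finCongr (by rw [hq] :
        m + Module.finrank K U' = m + Module.finrank K (V ⧸ U))).symm
        (⟨(a : ℕ), by omega⟩ : Fin (m + Module.finrank K (V ⧸ U)))) = Sum.inl a := by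
      rw [Equiv.symm_apply_eq]
      ext
      simp
    rw [hidx, show b0 = (bU.prod bU').map e from rfl, Module.Basis.map_apply]
    have : (bU.prod bU') (Sum.inl a) = (bU a, 0) :=
      Prod.ext (Module.Basis.prod_apply_inl_fst bU bU' a) (Module.Basis.prod_apply_inl_snd bU bU' a)
    rw [this, Submodule.coe_prodEquivOfIsCompl']
    simp
  have himg : b '' {k | (k : ℕ) < m} = Set.range fun a : Fin m => (bU a : V) := by
    ext x
    constructor
    · rintro ⟨k, hk, rfl⟩
      exact ⟨⟨(k : ℕ), hk⟩, (hbl ⟨(k : ℕ), hk⟩).symm.trans (congrArg b (Fin.ext rfl))⟩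
    · rintro ⟨a, rfl⟩
      exact ⟨⟨(a : ℕ), by omega⟩, by exact a.2, hbl a⟩
  rw [himg]
  have : Set.range (fun a : Fin m => (bU a : V)) = U.subtype '' Set.range bU := by
    rw [← Set.range_comp]; rfl
  rw [this, ← Submodule.map_span, Module.Basis.span_eq, Submodule.map_top, Submodule.range_subtype]


lemma exists_adapted' [FiniteDimensional K V] (U : Submodule K V) :
    ∃ (m m' : ℕ) (b : Module.Basis (Fin (m + m')) K V),
      m = Module.finrank K U ∧ m' = Module.finrank K (V ⧸ U) ∧
      U = Submodule.span K (b '' {k | (k : ℕ) < m}) := by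
  obtain ⟨b, hU⟩ := exists_adapted U
  exact ⟨_, _, b, rfl, rfl, hU⟩

lemma filtration_mono (U : Submodule K V) (l i : ℕ) :
    exteriorFiltration U l (i + 1) ≤ exteriorFiltration U l i := by
  by_cases h : i + 1 ≤ l
  · have h' : i ≤ l := by omega
    rw [exteriorFiltration, exteriorFiltration, if_pos h, if_pos h']
    apply Submodule.span_mono
    rintro w ⟨u, hu, rfl⟩
    exact ⟨u, fun j hj => hu j (by omega), rfl⟩
  · rw [exteriorFiltration, if_neg h]
    exact bot_le

end ExtFil

/-- for a short exact sequence `0 → U → V → W → 0` of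
finite-dimensional `K`-vector spaces, the subspaces `F_i ⊆ Λ^l V` form a
filtration `0 = F_{l+1} ⊆ F_l ⊆ ... ⊆ F_0 = Λ^l V` with
`F_i/F_{i+1} ≅ Λ^i U ⊗ Λ^{l-i} W`. -/
theorem exteriorFiltration_spec [FiniteDimensional K V] (U : Submodule K V) (l : ℕ) :
    exteriorFiltration U l 0 = ⋀[K]^l V ∧
    exteriorFiltration U l (l + 1) = ⊥ ∧
    (∀ i : ℕ, exteriorFiltration U l (i + 1) ≤ exteriorFiltration U l i) ∧
    (∀ i : ℕ, i ≤ l →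
      Nonempty
        ((↥(exteriorFiltration U l i) ⧸
            Submodule.comap (exteriorFiltration U l i).subtype
              (exteriorFiltration U l (i + 1))) ≃ₗ[K]
          TensorProduct K (↥(⋀[K]^i ↥U)) (↥(⋀[K]^(l - i) (V ⧸ U))))) := by
  obtain ⟨m, m', b, hm, hm', hU⟩ := ExtFil.exists_adapted' U
  refine ⟨ExtFil.filtration_zero U l, by rw [exteriorFiltration, if_neg (by omega)],
    ExtFil.filtration_mono U l, ?_⟩
  intro i hil
  have hpcard : ((Finset.univ : Finset (Fin (m + m'))).filter
      fun k : Fin (m + m') => (k : ℕ) < m).card = m :=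
    ExtFil.card_filter_val_lt m (Nat.le_add_right m m')
  have hnpcard : ((Finset.univ : Finset (Fin (m + m'))).filter
      fun k : Fin (m + m') => ¬ (k : ℕ) < m).card = m' := by
    have := Finset.card_filter_add_card_filter_not
      (s := (Finset.univ : Finset (Fin (m + m')))) (p := fun k : Fin (m + m') => (k : ℕ) < m)
    rw [Finset.card_univ, Fintype.card_fin] at this
    omega
  have hstep := ExtFil.card_step (fun k : Fin (m + m') => (k : ℕ) < m) l i
  have hsplit := ExtFil.card_split (fun k : Fin (m + m') => (k : ℕ) < m) hil hpcard hnpcard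
  haveI hFDi : FiniteDimensional K (exteriorFiltration U l i) :=
    ExtFil.filtration_fd b l U hU hil
  have hri : Module.finrank K (exteriorFiltration U l i) =
      (Finset.univ.filter fun S : Finset (Fin (m + m')) =>
        S.card = l ∧ i ≤ (S.filter fun k : Fin (m + m') => (k : ℕ) < m).card).card :=
    ExtFil.filtration_finrank b l U hU hil
  have hri1 : Module.finrank K (exteriorFiltration U l (i + 1)) =
      (Finset.univ.filter fun S : Finset (Fin (m + m')) =>
        S.card = l ∧ i + 1 ≤ (S.filter fun k : Fin (m + m') => (k : ℕ) < m).card).card := by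
    by_cases h : i + 1 ≤ l
    · exact ExtFil.filtration_finrank b l U hU h
    · have hi : i = l := by omega
      subst hi
      rw [exteriorFiltration, if_neg h,
        ExtFil.card_top_empty (fun k : Fin (m + m') => (k : ℕ) < m) i, finrank_bot]
  have hle := ExtFil.filtration_mono U l i
  have hcomap : Module.finrank K
      (Submodule.comap (exteriorFiltration U l i).subtype (exteriorFiltration U l (i + 1)))
      = Module.finrank K (exteriorFiltration U l (i + 1)) :=
    (Submodule.comapSubtypeEquivOfLe hle).finrank_eq
  have hquot := Submodule.finrank_quotient_add_finrank
    (Submodule.comap (exteriorFiltration U l i).subtype (exteriorFiltration U l (i + 1)))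
  haveI : FiniteDimensional K (⋀[K]^i (↥U)) := ExtFil.exteriorPower_fd i
  haveI : FiniteDimensional K (⋀[K]^(l - i) (V ⧸ U)) := ExtFil.exteriorPower_fd (l - i)
  haveI : Module.Free K (⋀[K]^i (↥U)) := Module.Free.of_divisionRing K _
  haveI : Module.Free K (⋀[K]^(l - i) (V ⧸ U)) := Module.Free.of_divisionRing K _
  have hrhs : Module.finrank K (TensorProduct K (↥(⋀[K]^i ↥U)) (↥(⋀[K]^(l - i) (V ⧸ U))))
      = m.choose i * m'.choose (l - i) := by
    rw [Module.finrank_tensorProduct, ExtFil.finrank_exteriorPower,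
      ExtFil.finrank_exteriorPower, ← hm, ← hm']
  have hfr : Module.finrank K
      (↥(exteriorFiltration U l i) ⧸
        Submodule.comap (exteriorFiltration U l i).subtype (exteriorFiltration U l (i + 1))) =
      Module.finrank K (TensorProduct K (↥(⋀[K]^i ↥U)) (↥(⋀[K]^(l - i) (V ⧸ U)))) := by
    omega
  exact FiniteDimensional.nonempty_linearEquiv_of_finrank_eq hfr
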